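/- Let θ ∈ (0,2) and let w : ℝ³ → ℝ be a C² function such that f := -Δw + (2/r²) w satisfies |f(x)| ≤ K r(x)^{-θ-2} for all x, and w(x) → 0 as |x| → ∞. Then |w(x)| ≤ C K r(x)^{-θ} for all x, where C depends only on θ. -/

import Mathlib

open MeasureTheory Filter
open scoped BigOperators Topology RealInnerProductSpace

noncomputable section

abbrev E3 : Type := EuclideanSpace ℝ (Fin 3)

/-- Partial derivative in the `i`-th coordinate direction. -/
noncomputable def pd (i : Fin 3) (f : E3 → ℝ) (x : E3) : ℝ :=
  fderiv ℝ f x (EuclideanSpace.single i 1)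

/-- Euclidean Laplacian on `ℝ³`. -/
noncomputable def lap (f : E3 → ℝ) (x : E3) : ℝ :=
  ∑ i : Fin 3, pd i (pd i f) x

namespace Stmt11

def S (x : E3) : ℝ := ∑ j, x j ^ 2

def Sd (x : E3) : E3 →L[ℝ] ℝ := ∑ j, (2 * x j) • EuclideanSpace.proj (𝕜 := ℝ) j

lemma S_nonneg (x : E3) : 0 ≤ S x := Finset.sum_nonneg fun j _ => sq_nonneg _

lemma S_eq_norm_sq (x : E3) : S x = ‖x‖ ^ 2 := by
  rw [EuclideanSpace.norm_eq, Real.sq_sqrt (Finset.sum_nonneg fun i _ => sq_nonneg _)]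
  simp [S]

lemma Sd_apply (x : E3) (i : Fin 3) : Sd x (EuclideanSpace.single i 1) = 2 * x i := by
  simp [Sd, ContinuousLinearMap.sum_apply, EuclideanSpace.single_apply]

lemma hasFDerivAt_S (x : E3) : HasFDerivAt S (Sd x) x := by
  have : ∀ j : Fin 3, HasFDerivAt (fun y : E3 => y j ^ 2)
      ((2 * x j) • EuclideanSpace.proj (𝕜 := ℝ) j) x := by
    intro j
    have h := (EuclideanSpace.proj (𝕜 := ℝ) j).hasFDerivAt (x := x)
    have h2 := h.mul h
    have he : (fun y : E3 => (EuclideanSpace.proj (𝕜 := ℝ) j) y * (EuclideanSpace.proj (𝕜 := ℝ) j) y) = fun y : E3 => y j ^ 2 := by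
      funext y; simp [sq]
    rw [← he]; change HasFDerivAt (⇑(EuclideanSpace.proj (𝕜 := ℝ) j) * ⇑(EuclideanSpace.proj (𝕜 := ℝ) j)) _ x
    refine h2.congr_fderiv ?_
    have : ((EuclideanSpace.proj (𝕜 := ℝ) j) x : ℝ) = x j := rfl
    rw [this]
    module
  have hsum := HasFDerivAt.fun_sum (fun j (_ : j ∈ Finset.univ) => this j)
  exact hsum

lemma one_add_S_pos (x : E3) : (0:ℝ) < 1 + S x := by linarith [S_nonneg x]

lemma hasDerivAt_H (p t : ℝ) (ht : 0 ≤ t) :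
    HasDerivAt (fun t : ℝ => (1 + t) ^ p) (p * (1 + t) ^ (p - 1)) t := by
  have h1 : HasDerivAt (fun t : ℝ => 1 + t) 1 t := by
    simpa using (hasDerivAt_id t).const_add 1
  have h2 : HasDerivAt (fun u : ℝ => u ^ p) (p * (1 + t) ^ (p - 1)) (1 + t) :=
    Real.hasDerivAt_rpow_const (Or.inl (by linarith))
  have := h2.comp t h1; rwa [mul_one] at this

lemma hasFDerivAt_phi (p : ℝ) (x : E3) :
    HasFDerivAt (fun y => (1 + S y) ^ p) ((p * (1 + S x) ^ (p - 1)) • Sd x) x :=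
  (hasDerivAt_H p (S x) (S_nonneg x)).comp_hasFDerivAt x (hasFDerivAt_S x)

lemma pd_phi (p : ℝ) (i : Fin 3) :
    pd i (fun y => (1 + S y) ^ p) = fun x => p * (1 + S x) ^ (p - 1) * (2 * x i) := by
  funext x
  rw [pd, (hasFDerivAt_phi p x).fderiv]
  simp [Sd_apply, mul_assoc]


def phiD (p : ℝ) (i : Fin 3) (x : E3) : E3 →L[ℝ] ℝ :=
  (2 * x i) • ((p * (p - 1) * (1 + S x) ^ (p - 2)) • Sd x)
    + (p * (1 + S x) ^ (p - 1)) • ((2:ℝ) • EuclideanSpace.proj (𝕜 := ℝ) i)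

lemma hasFDerivAt_pd_phi (p : ℝ) (i : Fin 3) (x : E3) :
    HasFDerivAt (fun x => p * (1 + S x) ^ (p - 1) * (2 * x i)) (phiD p i x) x := by
  have hf : HasFDerivAt (fun y => p * (1 + S y) ^ (p - 1))
      ((p * (p - 1) * (1 + S x) ^ (p - 2)) • Sd x) x := by
    have h1 : HasDerivAt (fun t : ℝ => p * (1 + t) ^ (p - 1))
        (p * ((p - 1) * (1 + S x) ^ (p - 1 - 1))) (S x) :=
      (hasDerivAt_H (p - 1) (S x) (S_nonneg x)).const_mul p
    have h2 := h1.comp_hasFDerivAt x (hasFDerivAt_S x)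
    have : p * ((p - 1) * (1 + S x) ^ (p - 1 - 1)) = p * (p - 1) * (1 + S x) ^ (p - 2) := by
      ring_nf
    rwa [this] at h2
  have hg : HasFDerivAt (fun y : E3 => 2 * y i)
      ((2:ℝ) • EuclideanSpace.proj (𝕜 := ℝ) i) x := by
    exact (EuclideanSpace.proj (𝕜 := ℝ) i).hasFDerivAt.const_mul 2
  have h := hf.mul hg
  have he : (fun y : E3 => p * (1 + S y) ^ (p - 1) * (2 * y i))
      = fun y : E3 => (fun y => p * (1 + S y) ^ (p - 1)) y * (fun y : E3 => 2 * y i) y := rfl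
  show HasFDerivAt ((fun y => p * (1 + S y) ^ (p - 1)) * (fun y : E3 => 2 * y i)) (phiD p i x) x
  refine h.congr_fderiv ?_
  rw [phiD]
  module

lemma pd_pd_phi (p : ℝ) (i : Fin 3) (x : E3) :
    pd i (pd i (fun y => (1 + S y) ^ p)) x
      = p * (p - 1) * (1 + S x) ^ (p - 2) * (2 * x i) * (2 * x i)
        + p * (1 + S x) ^ (p - 1) * 2 := by
  rw [pd, pd_phi, (hasFDerivAt_pd_phi p i x).fderiv]
  simp [phiD, Sd_apply, EuclideanSpace.single_apply]
  ring

lemma sum_sq (c : ℝ) (x : E3) : ∑ i : Fin 3, c * (2 * x i) * (2 * x i) = c * (4 * S x) := by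
  rw [S, Finset.mul_sum, Finset.mul_sum]
  exact Finset.sum_congr rfl fun i _ => by ring

lemma lap_phi (p : ℝ) (x : E3) :
    lap (fun y => (1 + S y) ^ p) x
      = 4 * (p * (p - 1)) * S x * (1 + S x) ^ (p - 2) + 6 * p * (1 + S x) ^ (p - 1) := by
  rw [lap]
  rw [Finset.sum_congr rfl fun i _ => pd_pd_phi p i x]
  rw [Finset.sum_add_distrib]
  simp only [Finset.sum_const, Finset.card_univ, Fintype.card_fin, nsmul_eq_mul]
  rw [sum_sq]
  ring


lemma second_deriv_test {f f' : ℝ → ℝ} {a : ℝ}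
    (hf : ∀ t, HasDerivAt f (f' t) t) (hf' : HasDerivAt f' a 0)
    (hmin : ∀ t, f 0 ≤ f t) : 0 ≤ a := by
  by_contra hneg
  push_neg at hneg
  have hf0 : f' 0 = 0 := by
    have hm : IsLocalMin f 0 := Filter.Eventually.of_forall fun t => hmin t
    exact hm.hasDerivAt_eq_zero (hf 0)
  have hslope : Tendsto (fun t => f' t / t) (𝓝[>] 0) (𝓝 a) := by
    have := hasDerivAt_iff_tendsto_slope.mp hf'
    have h2 : Tendsto (slope f' 0) (𝓝[>] (0:ℝ)) (𝓝 a) :=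
      this.mono_left (nhdsWithin_mono 0 fun t ht => ne_of_gt ht)
    refine h2.congr fun t => ?_
    simp [slope, hf0]
    ring
  have hev : ∀ᶠ t in 𝓝[>] (0:ℝ), f' t / t < 0 := hslope.eventually_lt_const hneg
  rw [eventually_nhdsWithin_iff] at hev
  rcases Metric.eventually_nhds_iff.mp hev with ⟨δ, hδ, hball⟩
  have hneg' : ∀ t ∈ Set.Ioo (0:ℝ) δ, f' t < 0 := by
    intro t ht
    have h1 : f' t / t < 0 := hball (by
      rw [Real.dist_eq, sub_zero, abs_of_pos ht.1]; exact ht.2) ht.1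
    rcases div_neg_iff.mp h1 with h | h
    · exact absurd ht.1 (not_lt.mpr h.2.le)
    · exact h.1
  have hanti : StrictAntiOn f (Set.Icc 0 (δ/2)) := by
    apply strictAntiOn_of_deriv_neg (convex_Icc _ _)
    · exact fun t _ => (hf t).continuousAt.continuousWithinAt
    · intro t ht
      rw [interior_Icc] at ht
      rw [(hf t).deriv]
      exact hneg' t ⟨ht.1, ht.2.trans_le (by linarith)⟩
  have : f (δ/2) < f 0 :=
    hanti (Set.left_mem_Icc.mpr (by linarith)) (Set.right_mem_Icc.mpr (by linarith)) (by linarith)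
  exact absurd (hmin (δ/2)) (not_le.mpr this)


lemma max_principle (v : E3 → ℝ) (hv1 : Differentiable ℝ v)
    (hv2 : ∀ i, Differentiable ℝ (pd i v))
    (hL : ∀ x, 0 ≤ -(lap v x) + 2 / (max ‖x‖ 1) ^ 2 * v x)
    (h0 : Tendsto v (Filter.comap (fun x : E3 => ‖x‖) atTop) (𝓝 0)) :
    ∀ x, 0 ≤ v x := by
  by_contra hcon
  push_neg at hcon
  obtain ⟨x₀, hx₀⟩ := hcon
  have hev : ∀ᶠ x in Filter.comap (fun x : E3 => ‖x‖) atTop, v x₀ < v x :=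
    h0.eventually (eventually_gt_nhds hx₀)
  obtain ⟨t, ht, hsub⟩ := Filter.mem_comap.mp hev
  obtain ⟨R, hR⟩ := mem_atTop_sets.mp ht
  have hfar : ∀ x : E3, R ≤ ‖x‖ → v x₀ < v x := fun x hx => hsub (hR _ hx)
  set R' := max R 0 with hR'
  have hx₀mem : x₀ ∈ Metric.closedBall (0:E3) R' := by
    simp only [Metric.mem_closedBall, dist_zero_right]
    by_contra h
    push_neg at h
    exact absurd (hfar x₀ (le_trans (le_max_left R 0) h.le)) (lt_irrefl _)
  obtain ⟨x₁, hx₁mem, hx₁min⟩ := (isCompact_closedBall (0:E3) R').exists_isMinOn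
    ⟨x₀, hx₀mem⟩ hv1.continuous.continuousOn
  have hglob : ∀ x, v x₁ ≤ v x := by
    intro x
    by_cases hx : x ∈ Metric.closedBall (0:E3) R'
    · exact isMinOn_iff.mp hx₁min x hx
    · simp only [Metric.mem_closedBall, dist_zero_right, not_le] at hx
      exact le_trans (isMinOn_iff.mp hx₁min x₀ hx₀mem)
        (hfar x (le_trans (le_max_left R 0) hx.le)).le
  have hvx₁ : v x₁ < 0 := lt_of_le_of_lt (hglob x₀) hx₀
  have hlap : 0 ≤ lap v x₁ := by
    rw [lap]
    apply Finset.sum_nonneg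
    intro i _
    set e := EuclideanSpace.single i (1:ℝ) with he
    set L : ℝ → E3 := fun t => x₁ + t • e with hLdef
    have hL0 : L 0 = x₁ := by simp [hLdef]
    have hLd : ∀ t, HasDerivAt L e t := by
      intro t
      simpa only [hLdef, one_smul, id_eq] using ((hasDerivAt_id t).smul_const e).const_add x₁
    have hF : ∀ t, HasDerivAt (fun s => v (L s)) (pd i v (L t)) t := by
      intro t
      have := ((hv1 (L t)).hasFDerivAt).comp_hasDerivAt t (hLd t)
      rw [pd, ← he]; exact this
    have hF' : HasDerivAt (fun s => pd i v (L s)) (pd i (pd i v) x₁) 0 := by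
      have := ((hv2 i (L 0)).hasFDerivAt).comp_hasDerivAt 0 (hLd 0)
      rw [hL0] at this
      exact this
    exact second_deriv_test hF hF' (fun t => by rw [hL0]; exact hglob (L t))
  have h2 := hL x₁
  have hr1 : (1:ℝ) ≤ max ‖x₁‖ 1 := le_max_right _ _
  have hr : 0 < 2 / (max ‖x₁‖ 1) ^ 2 := by positivity
  nlinarith [mul_neg_of_pos_of_neg hr hvx₁]


lemma rsq_eq (x : E3) : (max ‖x‖ 1) ^ 2 = max (S x) 1 := by
  rw [S_eq_norm_sq]
  rcases le_total ‖x‖ 1 with h | h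
  · rw [max_eq_right h, max_eq_right (by nlinarith [norm_nonneg x] : ‖x‖^2 ≤ 1)]
    norm_num
  · rw [max_eq_left h, max_eq_left (by nlinarith : (1:ℝ) ≤ ‖x‖^2)]

lemma rsq_le (x : E3) : (max ‖x‖ 1) ^ 2 ≤ 1 + S x := by
  rw [rsq_eq]
  exact max_le (by linarith [S_nonneg x]) (by linarith [S_nonneg x])

lemma le_rsq (x : E3) : 1 + S x ≤ 2 * (max ‖x‖ 1) ^ 2 := by
  rw [rsq_eq]
  have h1 : S x ≤ max (S x) 1 := le_max_left _ _
  have h2 : (1:ℝ) ≤ max (S x) 1 := le_max_right _ _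
  linarith

lemma bracket_ineq (θ : ℝ) (hθ : θ ∈ Set.Ioo (0:ℝ) 2) (x : E3) :
    min 2 ((2-θ)*(1+θ)) * (1 + S x)
      ≤ 3*θ + θ*(1-θ)*(S x) + 2 / (max ‖x‖ 1) ^ 2 * (1 + S x)^2 := by
  obtain ⟨hθ0, hθ2⟩ := hθ
  have hs0 : 0 ≤ S x := S_nonneg x
  have hc1 : min 2 ((2-θ)*(1+θ)) ≤ 2 := min_le_left _ _
  have hc2 : min 2 ((2-θ)*(1+θ)) ≤ (2-θ)*(1+θ) := min_le_right _ _
  rw [rsq_eq]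
  rcases le_total (S x) 1 with h | h
  · rw [max_eq_right h]
    have : 2 / (1:ℝ) = 2 := by norm_num
    rw [this]
    nlinarith [sq_nonneg (S x), sq_nonneg θ, mul_nonneg hθ0.le hs0]
  · rw [max_eq_left h]
    have hspos : 0 < S x := by linarith
    have hdiv : 2 * (1 + S x) ≤ 2 / S x * (1 + S x)^2 := by
      rw [div_mul_eq_mul_div, le_div_iff₀ hspos]
      nlinarith
    nlinarith [mul_nonneg (sub_nonneg.mpr hc2) (by linarith : (0:ℝ) ≤ 1 + S x),
      mul_nonneg hθ0.le hs0, sq_nonneg θ]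

lemma L_phi_eq (θ : ℝ) (x : E3) :
    -(lap (fun y => (1 + S y) ^ (-(θ/2))) x)
        + 2 / (max ‖x‖ 1) ^ 2 * ((1 + S x) ^ (-(θ/2)))
      = (1 + S x) ^ (-(θ/2) - 2)
        * (3*θ + θ*(1-θ)*(S x) + 2 / (max ‖x‖ 1) ^ 2 * (1 + S x)^2) := by
  have h1s : (0:ℝ) < 1 + S x := one_add_S_pos x
  have hA1 : (1 + S x) ^ (-(θ/2) - 1) = (1 + S x) ^ (-(θ/2) - 2) * (1 + S x) := by
    rw [show -(θ/2) - 1 = (-(θ/2) - 2) + 1 by ring, Real.rpow_add_one h1s.ne']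
  have hA0 : (1 + S x) ^ (-(θ/2)) = (1 + S x) ^ (-(θ/2) - 2) * (1 + S x)^2 := by
    rw [show -(θ/2) = (-(θ/2) - 2) + 2 by ring, Real.rpow_add h1s]
    norm_num [Real.rpow_natCast (1 + S x) 2]
  rw [lap_phi, hA1, hA0]
  ring

lemma barrier (θ : ℝ) (hθ : θ ∈ Set.Ioo (0:ℝ) 2) (x : E3) :
    (max ‖x‖ 1) ^ (-θ - 2)
      ≤ ((2:ℝ) ^ ((1:ℝ) + θ/2) / min 2 ((2-θ)*(1+θ)))
        * (-(lap (fun y => (1 + S y) ^ (-(θ/2))) x)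
            + 2 / (max ‖x‖ 1) ^ 2 * ((1 + S x) ^ (-(θ/2)))) := by
  obtain ⟨hθ0, hθ2⟩ := hθ
  have h1s : (0:ℝ) < 1 + S x := one_add_S_pos x
  have hr0 : (0:ℝ) < max ‖x‖ 1 := lt_of_lt_of_le one_pos (le_max_right _ _)
  have hc0 : (0:ℝ) < min 2 ((2-θ)*(1+θ)) := lt_min two_pos (by nlinarith)
  have hA : (0:ℝ) < (1 + S x) ^ (-(θ/2) - 2) := Real.rpow_pos_of_pos h1s _
  rw [L_phi_eq]
  -- step 1 : A * B ≥ A * (c * (1+s)) = c * (1+s)^(p-1)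
  have h1 : (1 + S x) ^ (-(θ/2) - 2) * (min 2 ((2-θ)*(1+θ)) * (1 + S x))
      ≤ (1 + S x) ^ (-(θ/2) - 2)
        * (3*θ + θ*(1-θ)*(S x) + 2 / (max ‖x‖ 1) ^ 2 * (1 + S x)^2) :=
    mul_le_mul_of_nonneg_left (bracket_ineq θ ⟨hθ0, hθ2⟩ x) hA.le
  have hA1 : (1 + S x) ^ (-(θ/2) - 2) * (1 + S x) = (1 + S x) ^ (-(θ/2) - 1) := by
    rw [show -(θ/2) - 1 = (-(θ/2) - 2) + 1 by ring, Real.rpow_add_one h1s.ne']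
  -- step 2 : (1+s)^(p-1) ≥ 2^(p-1) * r^(-θ-2)
  have h2 : (2:ℝ) ^ (-(θ/2) - 1) * (max ‖x‖ 1) ^ (-θ - 2)
      ≤ (1 + S x) ^ (-(θ/2) - 1) := by
    have hle : (2 * (max ‖x‖ 1) ^ 2 : ℝ) ^ (-(θ/2) - 1) ≤ (1 + S x) ^ (-(θ/2) - 1) :=
      Real.rpow_le_rpow_of_nonpos h1s (le_rsq x) (by linarith)
    have heq : (2 * (max ‖x‖ 1) ^ 2 : ℝ) ^ (-(θ/2) - 1)
        = (2:ℝ) ^ (-(θ/2) - 1) * (max ‖x‖ 1) ^ (-θ - 2) := by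
      rw [Real.mul_rpow (by norm_num) (by positivity)]
      congr 1
      rw [← Real.rpow_natCast (max ‖x‖ 1) 2, ← Real.rpow_mul hr0.le]
      norm_num
      ring_nf
    rw [← heq]
    exact hle
  -- combine
  set c := min 2 ((2-θ)*(1+θ))
  set A := (1 + S x) ^ (-(θ/2) - 2)
  set B := 3*θ + θ*(1-θ)*(S x) + 2 / (max ‖x‖ 1) ^ 2 * (1 + S x)^2
  have key : c * ((2:ℝ) ^ (-(θ/2) - 1) * (max ‖x‖ 1) ^ (-θ - 2)) ≤ A * B := by
    calc c * ((2:ℝ) ^ (-(θ/2) - 1) * (max ‖x‖ 1) ^ (-θ - 2))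
        ≤ c * ((1 + S x) ^ (-(θ/2) - 1)) := by
          exact mul_le_mul_of_nonneg_left h2 hc0.le
      _ = A * (c * (1 + S x)) := by rw [← hA1]; ring
      _ ≤ A * B := h1
  have hpow : ((2:ℝ) ^ ((1:ℝ) + θ/2)) * ((2:ℝ) ^ (-(θ/2) - 1)) = 1 := by
    rw [← Real.rpow_add two_pos, show (1:ℝ) + θ/2 + (-(θ/2) - 1) = 0 by ring, Real.rpow_zero]
  have h2pos : (0:ℝ) < (2:ℝ) ^ ((1:ℝ) + θ/2) := Real.rpow_pos_of_pos two_pos _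
  have h3 := mul_le_mul_of_nonneg_left key (le_of_lt (div_pos h2pos hc0))
  have heq : (2:ℝ) ^ ((1:ℝ) + θ/2) / c * (c * ((2:ℝ) ^ (-(θ/2) - 1) * (max ‖x‖ 1) ^ (-θ - 2)))
      = ((2:ℝ) ^ ((1:ℝ) + θ/2) * (2:ℝ) ^ (-(θ/2) - 1)) * (max ‖x‖ 1) ^ (-θ - 2) := by
    field_simp
  rw [heq, hpow, one_mul] at h3
  exact h3


lemma phi_pos (p : ℝ) (x : E3) : 0 < (1 + S x) ^ p :=
  Real.rpow_pos_of_pos (one_add_S_pos x) _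

lemma phi_le (θ : ℝ) (hθ0 : 0 < θ) (x : E3) :
    (1 + S x) ^ (-(θ/2)) ≤ (max ‖x‖ 1) ^ (-θ) := by
  have hr0 : (0:ℝ) < max ‖x‖ 1 := lt_of_lt_of_le one_pos (le_max_right _ _)
  have h1 : ((max ‖x‖ 1 : ℝ) ^ 2) ^ (-(θ/2)) = (max ‖x‖ 1) ^ (-θ) := by
    rw [← Real.rpow_natCast (max ‖x‖ 1) 2, ← Real.rpow_mul hr0.le]
    norm_num
    rw [show (2:ℝ) * (θ/2) = θ by ring]
  rw [← h1]
  exact Real.rpow_le_rpow_of_nonpos (by positivity) (rsq_le x) (by linarith)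

lemma phi_tendsto (θ : ℝ) (hθ0 : 0 < θ) :
    Tendsto (fun x : E3 => (1 + S x) ^ (-(θ/2)))
      (Filter.comap (fun x : E3 => ‖x‖) atTop) (𝓝 0) := by
  have h1 : Tendsto (fun t : ℝ => 1 + t ^ 2) atTop atTop :=
    tendsto_atTop_add_const_left _ 1 (tendsto_pow_atTop two_ne_zero)
  have h2 : Tendsto (fun u : ℝ => u ^ (-(θ/2))) atTop (𝓝 0) :=
    tendsto_rpow_neg_atTop (by linarith)
  have h3 : Tendsto (fun t : ℝ => (1 + t ^ 2) ^ (-(θ/2))) atTop (𝓝 0) := h2.comp h1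
  have h4 := h3.comp (tendsto_comap (f := fun x : E3 => ‖x‖))
  refine h4.congr fun x => ?_
  simp [Function.comp, S_eq_norm_sq]

lemma phi_diff (p : ℝ) : Differentiable ℝ (fun y : E3 => (1 + S y) ^ p) :=
  fun x => (hasFDerivAt_phi p x).differentiableAt

lemma pd_phi_diff (p : ℝ) (i : Fin 3) : Differentiable ℝ (pd i (fun y : E3 => (1 + S y) ^ p)) := by
  rw [pd_phi]
  exact fun x => (hasFDerivAt_pd_phi p i x).differentiableAt

lemma pd_w_diff {w : E3 → ℝ} (hw : ContDiff ℝ 2 w) (i : Fin 3) :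
    Differentiable ℝ (pd i w) := by
  have h1 : ContDiff ℝ 1 (fderiv ℝ w) := hw.fderiv_right (by norm_num)
  have h2 : ContDiff ℝ 1 (fun x => fderiv ℝ w x (EuclideanSpace.single i 1)) :=
    h1.clm_apply contDiff_const
  exact h2.differentiable one_ne_zero

lemma pd_comb (a b : ℝ) (f g : E3 → ℝ) (hf : Differentiable ℝ f) (hg : Differentiable ℝ g)
    (i : Fin 3) :
    pd i (fun y => a * f y + b * g y) = fun x => a * pd i f x + b * pd i g x := by
  funext x
  rw [pd, fderiv_fun_add ((hf x).const_mul a) ((hg x).const_mul b),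
    fderiv_const_mul (hf x), fderiv_const_mul (hg x)]
  rw [pd, pd]
  simp

lemma lap_comb (a b : ℝ) (f g : E3 → ℝ) (hf : Differentiable ℝ f) (hg : Differentiable ℝ g)
    (hf2 : ∀ i, Differentiable ℝ (pd i f)) (hg2 : ∀ i, Differentiable ℝ (pd i g)) (x : E3) :
    lap (fun y => a * f y + b * g y) x = a * lap f x + b * lap g x := by
  rw [lap, lap, lap, Finset.mul_sum, Finset.mul_sum, ← Finset.sum_add_distrib]
  refine Finset.sum_congr rfl fun i _ => ?_
  rw [pd_comb a b f g hf hg i, pd_comb a b (pd i f) (pd i g) (hf2 i) (hg2 i) i]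

end Stmt11

open Stmt11

/-- let `θ ∈ (0,2)` and `w` be `C²` with `w → 0` at infinity and
`|-Δw + (2/r²)w| ≤ K r^{-θ-2}` where `r(x) = max(|x|,1)`. Then `|w| ≤ C K r^{-θ}`,
with `C` depending only on `θ`. -/
theorem stmt11 (θ : ℝ) (hθ : θ ∈ Set.Ioo (0 : ℝ) 2) :
    ∃ C : ℝ, ∀ (w : E3 → ℝ) (K : ℝ), ContDiff ℝ 2 w →
      (∀ x : E3, |(-(lap w x) + 2 / (max ‖x‖ 1) ^ 2 * w x)| ≤ K * (max ‖x‖ 1) ^ (-θ - 2)) →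
      Tendsto w (Filter.comap (fun x : E3 => ‖x‖) atTop) (𝓝 0) →
      ∀ x : E3, |w x| ≤ C * K * (max ‖x‖ 1) ^ (-θ) := by
  obtain ⟨hθ0, hθ2⟩ := hθ
  refine ⟨(2:ℝ) ^ ((1:ℝ) + θ/2) / min 2 ((2-θ)*(1+θ)), ?_⟩
  set C : ℝ := (2:ℝ) ^ ((1:ℝ) + θ/2) / min 2 ((2-θ)*(1+θ)) with hCdef
  intro w K hw hf hw0
  have hc0 : (0:ℝ) < min 2 ((2-θ)*(1+θ)) := lt_min two_pos (by nlinarith)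
  have hCpos : 0 < C := div_pos (Real.rpow_pos_of_pos two_pos _) hc0
  have hK : 0 ≤ K := by
    have h := hf 0
    rw [norm_zero] at h
    rw [show max (0:ℝ) 1 = 1 by norm_num, Real.one_rpow, mul_one] at h
    exact le_trans (abs_nonneg _) h
  have hwdiff := hw.differentiable two_ne_zero
  have hpdw := pd_w_diff hw
  have side : ∀ b : ℝ, b = 1 ∨ b = -1 →
      ∀ x, 0 ≤ C * K * ((1 + S x) ^ (-(θ/2))) + b * w x := by
    intro b hb
    apply max_principle
    · exact ((phi_diff _).const_mul _).add (hwdiff.const_mul b)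
    · intro i
      rw [pd_comb (C*K) b _ w (phi_diff _) hwdiff i]
      exact ((pd_phi_diff _ i).const_mul _).add ((hpdw i).const_mul b)
    · intro x
      rw [lap_comb (C*K) b _ w (phi_diff _) hwdiff (pd_phi_diff _) hpdw x]
      have habs := abs_le.mp (hf x)
      have hb1 : -(K * (max ‖x‖ 1) ^ (-θ-2))
          ≤ b * (-(lap w x) + 2 / (max ‖x‖ 1) ^ 2 * w x) := by
        rcases hb with h | h <;> subst h
        · rw [one_mul]; exact habs.1
        · have := habs.2; nlinarith
      have hb2 : K * (max ‖x‖ 1) ^ (-θ-2)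
          ≤ C * K * (-(lap (fun y => (1 + S y) ^ (-(θ/2))) x)
              + 2 / (max ‖x‖ 1) ^ 2 * ((1 + S x) ^ (-(θ/2)))) := by
        have hbar := barrier θ ⟨hθ0, hθ2⟩ x
        have := mul_le_mul_of_nonneg_left hbar hK
        calc K * (max ‖x‖ 1) ^ (-θ-2)
            ≤ K * (C * (-(lap (fun y => (1 + S y) ^ (-(θ/2))) x)
              + 2 / (max ‖x‖ 1) ^ 2 * ((1 + S x) ^ (-(θ/2))))) := this
          _ = C * K * (-(lap (fun y => (1 + S y) ^ (-(θ/2))) x)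
              + 2 / (max ‖x‖ 1) ^ 2 * ((1 + S x) ^ (-(θ/2)))) := by ring
      have hexp : -(C * K * lap (fun y => (1 + S y) ^ (-(θ/2))) x + b * lap w x)
            + 2 / (max ‖x‖ 1) ^ 2 * (C * K * ((1 + S x) ^ (-(θ/2))) + b * w x)
          = C * K * (-(lap (fun y => (1 + S y) ^ (-(θ/2))) x)
              + 2 / (max ‖x‖ 1) ^ 2 * ((1 + S x) ^ (-(θ/2))))
            + b * (-(lap w x) + 2 / (max ‖x‖ 1) ^ 2 * w x) := by ring
      rw [hexp]
      linarith
    · have h1 := (phi_tendsto θ hθ0).const_mul (C*K)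
      have h2 := hw0.const_mul b
      have h3 := h1.add h2
      simpa using h3
  intro x
  have hplus := side 1 (Or.inl rfl) x
  have hminus := side (-1) (Or.inr rfl) x
  have hφle := phi_le θ hθ0 x
  have hmul : C * K * ((1 + S x) ^ (-(θ/2))) ≤ C * K * (max ‖x‖ 1) ^ (-θ) :=
    mul_le_mul_of_nonneg_left hφle (mul_nonneg hCpos.le hK)
  rw [abs_le]
  constructor <;> linarith
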